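/- arXiv:1203.4047 — 4 statements merged into one kernel-verified Lean document; each statement's English description precedes it below -/
import Mathlib

section
/- Let p be a prime, q = p^ν, and n ≥ 1. The image of the subgroup GL_{n+1}(𝔽_{q²}) under the map λ(T) = T · (conj T)ᵀ is exactly the set of invertible Hermitian matrices over 𝔽_{q²}, i.e., the set of H ∈ GL_{n+1}(𝔽_{q²}) with H = (conj H)ᵀ. -/
open Matrix Polynomial

set_option linter.unusedSectionVars false

section Helpers

variable {K : Type*} [Field K] {n : Type*} [Fintype n] [DecidableEq n]

lemma my_vecMulVec_mul (u v : n → K) (H : Matrix n n K) :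
    vecMulVec u v * H = vecMulVec u (v ᵥ* H) := by
  ext i j
  simp [Matrix.mul_apply, vecMulVec_apply, Matrix.vecMul, dotProduct,
    Finset.mul_sum, mul_assoc]

lemma my_mul_vecMulVec (u v : n → K) (H : Matrix n n K) :
    H * vecMulVec u v = vecMulVec (H *ᵥ u) v := by
  ext i j
  simp [Matrix.mul_apply, vecMulVec_apply, Matrix.mulVec, dotProduct,
    Finset.sum_mul, mul_assoc]

lemma my_transpose_vecMulVec (u v : n → K) : (vecMulVec u v)ᵀ = vecMulVec v u := by
  ext i j; simp [vecMulVec_apply, mul_comm]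

lemma my_vecMul_vecMulVec (w u v : n → K) :
    w ᵥ* vecMulVec u v = (w ⬝ᵥ u) • v := by
  ext j
  simp [Matrix.vecMul, vecMulVec_apply, dotProduct, Finset.sum_mul, mul_assoc]

lemma my_vecMulVec_mulVec (u w x : n → K) :
    vecMulVec u w *ᵥ x = (w ⬝ᵥ x) • u := by
  ext i
  simp only [Matrix.mulVec, vecMulVec_apply, dotProduct, Pi.smul_apply,
    smul_eq_mul, Finset.sum_mul]
  exact Finset.sum_congr rfl fun k _ => by ring

lemma conj_apply (H : Matrix n n K) (u v u' v' : n → K) (i j : n) :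
    (((1 + vecMulVec u v) * H * (1 + vecMulVec u' v')ᵀ : Matrix n n K)) i j
      = H i j + u i * (v ᵥ* H) j + (H *ᵥ v') i * u' j
        + u i * u' j * ((v ᵥ* H) ⬝ᵥ v') := by
  rw [transpose_add, transpose_one, my_transpose_vecMulVec]
  simp only [Matrix.add_mul, Matrix.mul_add, Matrix.one_mul, Matrix.mul_one]
  rw [my_vecMulVec_mul, my_mul_vecMulVec, my_mul_vecMulVec, my_vecMulVec_mulVec]
  simp only [Matrix.add_apply, vecMulVec_apply, Pi.smul_apply, smul_eq_mul]
  ring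

lemma isUnit_one_add_vecMulVec (u v : n → K) (h : v ⬝ᵥ u = 0) :
    IsUnit (1 + vecMulVec u v) := by
  have h2 : (1 + vecMulVec u v) * (1 - vecMulVec u v) = 1 := by
    rw [mul_sub, mul_one, add_mul, one_mul, my_vecMulVec_mul, my_vecMul_vecMulVec, h,
      zero_smul]
    have : vecMulVec u (0 : n → K) = 0 := by ext i j; simp [vecMulVec_apply]
    rw [this, add_zero, add_sub_cancel_right]
  exact ⟨⟨_, _, h2, mul_eq_one_comm.mp h2⟩, rfl⟩

end Helpers

section Congr

variable {K : Type*} [Field K] {n : Type*} [Fintype n] [DecidableEq n] (σ : K →+* K)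

lemma my_map_map_self (hinv : ∀ x, σ (σ x) = x) (M : Matrix n n K) :
    (M.map σ).map σ = M := by
  ext i j; simp [Matrix.map_apply, hinv]

lemma isUnit_transpose' {M : Matrix n n K} (h : IsUnit M) : IsUnit Mᵀ :=
  (Matrix.isUnit_iff_isUnit_det _).2 (by
    rw [Matrix.det_transpose]; exact (Matrix.isUnit_iff_isUnit_det _).1 h)

lemma congr_isUnit {P H : Matrix n n K} (hP : IsUnit P) (hH : IsUnit H) :
    IsUnit (P * H * (P.map σ)ᵀ) :=
  (hP.mul hH).mul (isUnit_transpose' (hP.map σ.mapMatrix))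

lemma congr_herm (hinv : ∀ x, σ (σ x) = x) (P H : Matrix n n K) (hH : Hᵀ = H.map σ) :
    (P * H * (P.map σ)ᵀ)ᵀ = (P * H * (P.map σ)ᵀ).map σ := by
  have h1 : ((P * H * (P.map σ)ᵀ) : Matrix n n K).map σ
      = P.map σ * H.map σ * ((P.map σ).map σ)ᵀ := by
    rw [Matrix.map_mul, Matrix.map_mul, Matrix.transpose_map]
  rw [h1, my_map_map_self σ hinv, Matrix.transpose_mul, Matrix.transpose_mul,
    Matrix.transpose_transpose, hH, mul_assoc]

lemma congr_solve (P H : Matrix n n K) (hP : IsUnit P)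
    (h : ∃ T, IsUnit T ∧ T * (T.map σ)ᵀ = P * H * (P.map σ)ᵀ) :
    ∃ T, IsUnit T ∧ T * (T.map σ)ᵀ = H := by
  obtain ⟨u, hu⟩ := hP
  obtain ⟨T, hT, hTeq⟩ := h
  set P' : Matrix n n K := ↑u⁻¹ with hP'
  refine ⟨P' * T, (u⁻¹.isUnit).mul hT, ?_⟩
  have hmap : ((P' * T).map σ)ᵀ = (T.map σ)ᵀ * (P'.map σ)ᵀ := by
    rw [Matrix.map_mul, Matrix.transpose_mul]
  have h1 : P' * P = 1 := by rw [hP', ← hu]; exact u.inv_mul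
  have h2 : (P.map σ)ᵀ * (P'.map σ)ᵀ = 1 := by
    rw [← Matrix.transpose_mul, ← Matrix.map_mul, h1, Matrix.map_one σ σ.map_zero σ.map_one,
      Matrix.transpose_one]
  rw [hmap, mul_assoc, ← mul_assoc T, hTeq]
  calc P' * (P * H * (P.map σ)ᵀ * (P'.map σ)ᵀ)
      = (P' * P) * H * ((P.map σ)ᵀ * (P'.map σ)ᵀ) := by
        simp only [mul_assoc]
    _ = H := by rw [h1, h2, one_mul, mul_one]

end Congr

section Main

variable {K : Type*} [Field K]

lemma det_pivot {m : ℕ} (M : Matrix (Fin (m + 1)) (Fin (m + 1)) K)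
    (h : ∀ i : Fin (m + 1), i ≠ 0 → M i 0 = 0) :
    M.det = M 0 0 * (M.submatrix Fin.succ Fin.succ).det := by
  rw [Matrix.det_succ_column_zero, Fin.sum_univ_succ]
  simp [h _ (Fin.succ_ne_zero _)]

lemma map_one_add_vecMulVec (σ : K →+* K) {n : Type*} [Fintype n] [DecidableEq n]
    (u v : n → K) :
    ((1 + vecMulVec u v : Matrix n n K)).map σ
      = 1 + vecMulVec (fun i => σ (u i)) (fun j => σ (v j)) := by
  ext i j
  simp only [Matrix.map_apply, Matrix.add_apply, Matrix.one_apply, vecMulVec_apply,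
    map_add, _root_.map_mul]
  congr 1
  split <;> simp

theorem herm_decomp (σ : K →+* K) (hinv : ∀ x, σ (σ x) = x)
    (hnorm : ∀ a, σ a = a → ∃ s, s * σ s = a)
    (hpiv : ∀ d e : K, (d ≠ 0 ∨ e ≠ 0) → ∃ c, d * (c * σ c) + e * c + σ (e * c) ≠ 0) :
    ∀ m (H : Matrix (Fin m) (Fin m) K), IsUnit H → Hᵀ = H.map σ →
      ∃ T : Matrix (Fin m) (Fin m) K, IsUnit T ∧ T * (T.map σ)ᵀ = H := by
  intro m
  induction m with
  | zero => exact fun H hU hherm => ⟨1, isUnit_one, Subsingleton.elim _ _⟩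
  | succ m IH =>
    have key0 : ∀ H : Matrix (Fin (m + 1)) (Fin (m + 1)) K, IsUnit H → Hᵀ = H.map σ →
        H 0 0 ≠ 0 → ∃ T : Matrix (Fin (m + 1)) (Fin (m + 1)) K,
          IsUnit T ∧ T * (T.map σ)ᵀ = H := by
      intro H hU hherm ha
      have hermP : ∀ i j, H j i = σ (H i j) := fun i j => congrFun (congrFun hherm i) j
      have hσa : σ (H 0 0) = H 0 0 := (hermP 0 0).symm
      set c : Fin (m + 1) → K := fun i => if i = 0 then 0 else -(H i 0) * (H 0 0)⁻¹
        with hc_def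
      have hc0 : c 0 = 0 := by simp [hc_def]
      have hQunit : IsUnit (1 + vecMulVec c (Pi.single (0 : Fin (m+1)) (1:K))) := by
        refine isUnit_one_add_vecMulVec _ _ ?_
        rw [single_dotProduct, hc0, mul_zero]
      have hsing : (fun j => σ ((Pi.single (0 : Fin (m+1)) (1:K) : Fin (m+1) → K) j))
          = Pi.single (0 : Fin (m+1)) (1:K) := by
        ext j
        rcases eq_or_ne j 0 with rfl | hj
        · simp
        · simp [Pi.single_eq_of_ne hj]
      set H' := (1 + vecMulVec c (Pi.single (0 : Fin (m+1)) (1:K))) * H *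
          (((1 + vecMulVec c (Pi.single (0 : Fin (m+1)) (1:K)))).map σ)ᵀ with hH'_def
      have hentry : ∀ i j, H' i j
          = H i j + c i * H 0 j + H i 0 * σ (c j) + c i * σ (c j) * H 0 0 := by
        intro i j
        rw [hH'_def, map_one_add_vecMulVec, hsing, conj_apply]
        rw [Matrix.single_vecMul, Matrix.mulVec_single]
        simp only [Matrix.row, Matrix.col, Matrix.transpose_apply, Pi.smul_apply, smul_eq_mul,
          MulOpposite.smul_eq_mul_unop, MulOpposite.unop_op, one_mul, mul_one]
        rw [dotProduct_single, one_smul]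
        ring
      have h00 : H' 0 0 = H 0 0 := by
        rw [hentry, hc0, map_zero]; ring
      have hrow : ∀ i, i ≠ 0 → H' i 0 = 0 := by
        intro i hi
        rw [hentry, hc0, map_zero]
        simp only [mul_zero, add_zero, zero_mul]
        have hci : c i = -(H i 0) * (H 0 0)⁻¹ := by simp [hc_def, hi]
        rw [hci]
        field_simp
        ring
      have hcol : ∀ j, j ≠ 0 → H' 0 j = 0 := by
        intro j hj
        rw [hentry, hc0, zero_mul, zero_mul]
        have hcj : σ (c j) = -(H 0 j) * (H 0 0)⁻¹ := by
          simp only [hc_def, if_neg hj]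
          rw [_root_.map_mul, map_neg, map_inv₀, hσa, ← hermP j 0]
        rw [hcj]
        field_simp
        ring
      have hermH' : H'ᵀ = H'.map σ := congr_herm σ hinv _ H hherm
      have hUnit' : IsUnit H' := congr_isUnit σ hQunit hU
      set H₂ := H'.submatrix Fin.succ Fin.succ with hH₂_def
      have herm2 : H₂ᵀ = H₂.map σ := by
        ext i j
        exact congrFun (congrFun hermH' i.succ) j.succ
      have hdet : H'.det = H 0 0 * H₂.det := by rw [det_pivot H' hrow, h00]
      have hU2 : IsUnit H₂ := by
        rw [Matrix.isUnit_iff_isUnit_det, isUnit_iff_ne_zero]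
        have hd := (Matrix.isUnit_iff_isUnit_det H').1 hUnit'
        rw [isUnit_iff_ne_zero, hdet] at hd
        exact fun h => hd (by rw [h, mul_zero])
      obtain ⟨T₂, hT₂u, hT₂⟩ := IH H₂ hU2 herm2
      obtain ⟨s, hs⟩ := hnorm (H 0 0) hσa
      have hs0 : s ≠ 0 := fun h => ha (by rw [← hs, h, zero_mul])
      set T : Matrix (Fin (m + 1)) (Fin (m + 1)) K := Matrix.of fun i j =>
        Fin.cases (Fin.cases s (fun _ => 0) j) (fun i' => Fin.cases 0 (fun j' => T₂ i' j') j) i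
        with hT_def
      have hT00 : T 0 0 = s := rfl
      have hT0s : ∀ j' : Fin m, T 0 j'.succ = 0 := fun j' => by simp [hT_def]
      have hTs0 : ∀ i' : Fin m, T i'.succ 0 = 0 := fun i' => by simp [hT_def]
      have hTss : ∀ i' j' : Fin m, T i'.succ j'.succ = T₂ i' j' := fun i' j' => by simp [hT_def]
      have happ : ∀ a b, (T.map σ)ᵀ a b = σ (T b a) := fun a b => rfl
      have hTeq : T * (T.map σ)ᵀ = H' := by
        ext i j
        rw [Matrix.mul_apply]
        induction i using Fin.cases with
        | zero =>
          induction j using Fin.cases with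
          | zero =>
            rw [Fin.sum_univ_succ, h00]
            simp only [happ, hT00, hT0s]
            rw [hs]
            simp
          | succ j' =>
            rw [Fin.sum_univ_succ, hcol j'.succ (Fin.succ_ne_zero j')]
            simp only [happ, hT00, hT0s, hTs0]
            simp
        | succ i' =>
          induction j using Fin.cases with
          | zero =>
            rw [Fin.sum_univ_succ, hrow i'.succ (Fin.succ_ne_zero i')]
            simp only [happ, hTs0, hT0s]
            simp
          | succ j' =>
            rw [Fin.sum_univ_succ]
            simp only [happ, hTs0, hTss]
            have hsub : H' i'.succ j'.succ = H₂ i' j' := rfl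
            rw [hsub, ← hT₂, Matrix.mul_apply]
            simp
      have hTunit : IsUnit T := by
        rw [Matrix.isUnit_iff_isUnit_det, isUnit_iff_ne_zero]
        have hz : ∀ i : Fin (m + 1), i ≠ 0 → T i 0 = 0 := by
          intro i hi
          obtain ⟨i', rfl⟩ := Fin.exists_succ_eq.2 hi
          exact hTs0 i'
        rw [det_pivot T hz, hT00]
        have hsub : T.submatrix Fin.succ Fin.succ = T₂ := by
          ext i j; exact hTss i j
        rw [hsub]
        have hd2 : T₂.det ≠ 0 := by
          rw [← isUnit_iff_ne_zero, ← Matrix.isUnit_iff_isUnit_det]; exact hT₂u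
        exact mul_ne_zero hs0 hd2
      exact congr_solve σ _ H hQunit ⟨T, hTunit, hTeq⟩
    intro H hU hherm
    have hermP : ∀ i j, H j i = σ (H i j) := fun i j => congrFun (congrFun hherm i) j
    by_cases h0 : H 0 0 ≠ 0
    · exact key0 H hU hherm h0
    push_neg at h0
    have hex : ∃ i : Fin (m + 1), i ≠ 0 ∧ (H i i ≠ 0 ∨ H i 0 ≠ 0) := by
      by_contra hno
      push_neg at hno
      have hcol0 : ∀ i, H i 0 = 0 := by
        intro i
        by_cases hi : i = 0
        · rw [hi]; exact h0
        · exact (hno i hi).2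
      have hdz := Matrix.det_eq_zero_of_column_eq_zero 0 hcol0
      rw [Matrix.isUnit_iff_isUnit_det, isUnit_iff_ne_zero] at hU
      exact hU hdz
    obtain ⟨i₀, hi₀, hde⟩ := hex
    obtain ⟨cc, hcc⟩ := hpiv (H i₀ i₀) (H i₀ 0) hde
    have hPunit : IsUnit (1 + vecMulVec (Pi.single (0 : Fin (m + 1)) (1 : K))
        (Pi.single i₀ cc)) := by
      refine isUnit_one_add_vecMulVec _ _ ?_
      rw [single_dotProduct, Pi.single_eq_of_ne hi₀, mul_zero]
    have hsing1 : (fun i => σ ((Pi.single (0 : Fin (m+1)) (1:K) : Fin (m+1) → K) i))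
        = Pi.single (0 : Fin (m+1)) (1:K) := by
      ext i
      rcases eq_or_ne i 0 with rfl | hi
      · simp
      · simp [Pi.single_eq_of_ne hi]
    have hsing2 : (fun j => σ ((Pi.single i₀ cc : Fin (m+1) → K) j)) = Pi.single i₀ (σ cc) := by
      ext j
      rcases eq_or_ne j i₀ with rfl | hj
      · simp
      · simp [Pi.single_eq_of_ne hj]
    refine congr_solve σ _ H hPunit (key0 _ (congr_isUnit σ hPunit hU)
      (congr_herm σ hinv _ H hherm) ?_)
    rw [map_one_add_vecMulVec, hsing1, hsing2, conj_apply]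
    rw [Matrix.single_vecMul, Matrix.mulVec_single, dotProduct_single]
    simp only [Matrix.row, Matrix.col, Matrix.transpose_apply, Pi.smul_apply, smul_eq_mul,
      MulOpposite.smul_eq_mul_unop, MulOpposite.unop_op]
    have hσe : H 0 i₀ = σ (H i₀ 0) := hermP i₀ 0
    have hrw : H 0 0 + (Pi.single (0 : Fin (m+1)) (1:K) : Fin (m+1) → K) 0 * (cc * H i₀ 0)
        + H 0 i₀ * σ cc * (Pi.single (0 : Fin (m+1)) (1:K) : Fin (m+1) → K) 0
        + (Pi.single (0 : Fin (m+1)) (1:K) : Fin (m+1) → K) 0 * (Pi.single (0 : Fin (m+1)) (1:K) : Fin (m+1) → K) 0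
          * (cc * H i₀ i₀ * σ cc)
        = H i₀ i₀ * (cc * σ cc) + H i₀ 0 * cc + σ (H i₀ 0 * cc) := by
      rw [h0, hσe, _root_.map_mul]
      simp only [Pi.single_eq_same, one_mul, mul_one]
      ring
    rw [hrw]
    exact hcc

end Main

section GF

/-- The image of `GL_{n+1}(𝔽_{q²})` under `λ(T) = T ⬝ (conj T)ᵀ` is exactly the set of
invertible Hermitian matrices over `𝔽_{q²}`. -/
theorem stmt_1 (p ν n q : ℕ) [Fact p.Prime] (hν : 0 < ν) (hn : 1 ≤ n) (hq : q = p ^ ν) :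
    {H : Matrix (Fin (n + 1)) (Fin (n + 1)) (GaloisField p (2 * ν)) |
        ∃ T : Matrix (Fin (n + 1)) (Fin (n + 1)) (GaloisField p (2 * ν)),
          IsUnit T ∧ T * (T.map fun a => a ^ q).transpose = H} =
      {H : Matrix (Fin (n + 1)) (Fin (n + 1)) (GaloisField p (2 * ν)) |
        IsUnit H ∧ H = (H.map fun a => a ^ q).transpose} := by
  have hp : p.Prime := Fact.out
  set K := GaloisField p (2 * ν) with hK
  letI : Fintype K := Fintype.ofFinite K
  have hq2 : 2 ≤ q := by
    rw [hq]
    exact Nat.one_lt_pow (by omega) hp.one_lt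
  have hcard : Fintype.card K = q ^ 2 := by
    rw [← Nat.card_eq_fintype_card, GaloisField.card p (2 * ν) (by omega), hq, ← pow_mul,
      mul_comm]
  -- the Frobenius σ
  set σ : K →+* K := iterateFrobenius K p ν with hσ_def
  have hσ : ∀ x : K, σ x = x ^ q := fun x => by rw [hσ_def, iterateFrobenius_def, hq]
  have hinv : ∀ x : K, σ (σ x) = x := by
    intro x
    rw [hσ, hσ, ← pow_mul, ← pow_two, ← hcard, FiniteField.pow_card]
  have hnorm : ∀ a : K, σ a = a → ∃ s : K, s * σ s = a := by
    intro a haa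
    rcases eq_or_ne a 0 with rfl | ha
    · exact ⟨0, by rw [zero_mul]⟩
    obtain ⟨g, hg⟩ := IsCyclic.exists_generator (α := Kˣ)
    have hga : (Units.mk0 a ha) ∈ Submonoid.powers g :=
      mem_powers_iff_mem_zpowers.2 (hg _)
    obtain ⟨k, hk0⟩ := hga
    have hk : g ^ k = Units.mk0 a ha := hk0
    have horder : orderOf g = q ^ 2 - 1 := by
      rw [orderOf_eq_card_of_forall_mem_zpowers hg, Nat.card_units,
        Nat.card_eq_fintype_card, hcard]
    have haq : a ^ (q - 1) = 1 := by
      have h1 : a ^ (q - 1) * a = a := by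
        rw [← pow_succ, Nat.sub_add_cancel (by omega), ← hσ, haa]
      exact mul_right_cancel₀ ha (by rw [h1, one_mul])
    have hua : (Units.mk0 a ha) ^ (q - 1) = 1 := by
      ext
      rw [Units.val_pow_eq_pow_val, Units.val_mk0, haq, Units.val_one]
    have hdvd : q ^ 2 - 1 ∣ k * (q - 1) := by
      rw [← horder]
      apply orderOf_dvd_of_pow_eq_one
      rw [pow_mul, hk, hua]
    have hfact : (q - 1) * (q + 1) = q ^ 2 - 1 := by
      obtain ⟨r, rfl⟩ := Nat.exists_eq_add_of_le (show 1 ≤ q by omega)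
      have h2 : (1 + r) ^ 2 = r * (r + 2) + 1 := by ring
      rw [h2, Nat.add_sub_cancel, Nat.add_sub_cancel_left]
      ring
    have hdvd2 : q + 1 ∣ k := by
      have h3 : (q - 1) * (q + 1) ∣ (q - 1) * k := by
        rw [hfact, mul_comm (q - 1) k]
        exact hdvd
      exact (Nat.mul_dvd_mul_iff_left (by omega : 0 < q - 1)).1 h3
    obtain ⟨t, ht⟩ := hdvd2
    refine ⟨(g : K) ^ t, ?_⟩
    rw [hσ, ← pow_mul, ← pow_add]
    have h5 : t + t * q = k := by rw [ht]; ring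
    rw [h5, ← Units.val_pow_eq_pow_val, hk, Units.val_mk0]
  have hpiv : ∀ d e : K, (d ≠ 0 ∨ e ≠ 0) →
      ∃ c : K, d * (c * σ c) + e * c + σ (e * c) ≠ 0 := by
    intro d e hde
    classical
    set f : Polynomial K := Polynomial.C d * Polynomial.X ^ (q + 1) + Polynomial.C e * Polynomial.X
        + Polynomial.C (e ^ q) * Polynomial.X ^ q with hf_def
    have hcoeff1 : f.coeff 1 = e := by
      simp only [hf_def, Polynomial.coeff_add, Polynomial.coeff_C_mul, Polynomial.coeff_X_pow,
        Polynomial.coeff_X_one, Polynomial.coeff_X]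
      rw [if_neg (by omega : ¬(1 = q + 1)), if_neg (by omega : ¬(1 = q))]
      simp
    have hcoeffq1 : f.coeff (q + 1) = d := by
      simp only [hf_def, Polynomial.coeff_add, Polynomial.coeff_C_mul, Polynomial.coeff_X_pow,
        Polynomial.coeff_X]
      rw [if_neg (by omega : ¬(1 = q + 1)), if_neg (by omega : ¬(q + 1 = q))]
      simp
    have hfne : f ≠ 0 := by
      rcases hde with hd | he
      · intro h; apply hd; rw [← hcoeffq1, h, Polynomial.coeff_zero]
      · intro h; apply he; rw [← hcoeff1, h, Polynomial.coeff_zero]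
    have hdeg : f.natDegree ≤ q + 1 := by
      refine le_trans (Polynomial.natDegree_add_le _ _) ?_
      refine max_le (le_trans (Polynomial.natDegree_add_le _ _) (max_le ?_ ?_)) ?_
      · exact le_trans (Polynomial.natDegree_C_mul_le _ _) (by simp)
      · exact le_trans (Polynomial.natDegree_C_mul_le _ _) (by simp)
      · exact le_trans (Polynomial.natDegree_C_mul_le _ _) (by simp)
    have hlt : (f.natDegree : Cardinal) < Cardinal.mk K := by
      rw [Cardinal.mk_fintype, hcard]
      have : f.natDegree < q ^ 2 := by
        refine lt_of_le_of_lt hdeg ?_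
        have : 2 * q ≤ q * q := Nat.mul_le_mul_right q hq2
        rw [pow_two]
        omega
      exact_mod_cast this
    obtain ⟨c, hc⟩ := Polynomial.exists_eval_ne_zero_of_natDegree_lt_card f hfne hlt
    refine ⟨c, ?_⟩
    have heval : f.eval c = d * (c * σ c) + e * c + σ (e * c) := by
      simp only [hf_def, Polynomial.eval_add, Polynomial.eval_mul, Polynomial.eval_C,
        Polynomial.eval_pow, Polynomial.eval_X]
      rw [hσ, hσ, mul_pow, ← pow_succ']
    rw [← heval]
    exact hc
  -- identification of the map in the statement with σ
  have hfun : ∀ M : Matrix (Fin (n + 1)) (Fin (n + 1)) K,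
      (M.map fun a => a ^ q) = M.map σ := by
    intro M; ext i j; rw [Matrix.map_apply, Matrix.map_apply, hσ]
  ext H
  simp only [Set.mem_setOf_eq]
  constructor
  · rintro ⟨T, hT, rfl⟩
    rw [hfun T]
    have hherm1 : (1 : Matrix (Fin (n+1)) (Fin (n+1)) K)ᵀ = (1 : Matrix _ _ K).map σ := by
      rw [Matrix.transpose_one, Matrix.map_one σ σ.map_zero σ.map_one]
    have h1 : (T * 1 * (T.map σ)ᵀ)ᵀ = (T * 1 * (T.map σ)ᵀ).map σ :=
      congr_herm σ hinv T 1 hherm1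
    rw [mul_one] at h1
    constructor
    · exact (hT.mul (isUnit_transpose' (hT.map σ.mapMatrix)))
    · rw [hfun, ← h1, Matrix.transpose_transpose]
  · rintro ⟨hU, hherm⟩
    rw [hfun H] at hherm
    have hherm' : Hᵀ = H.map σ := by
      conv_lhs => rw [hherm]
      rw [Matrix.transpose_transpose]
    obtain ⟨T, hTu, hTeq⟩ := herm_decomp σ hinv hnorm hpiv (n + 1) H hU hherm'
    exact ⟨T, hTu, by rw [hfun T]; exact hTeq⟩

end GF
end

section
/- Let p be a prime, q = p^ν, and n ≥ 1. For any two invertible Hermitian matrices H, H' ∈ GL_{n+1}(𝔽_{q²}) (i.e., H = (conj H)ᵀ and H' = (conj H')ᵀ) there exists T ∈ GL_{n+1}(𝔽_{q²}) such that T · H · (conj T)ᵀ = H'. -/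
open Matrix

namespace Stmt3Aux

variable {F : Type*} [Field F]

/-- Hermitian congruence via a ring hom `φ`. -/
def Cong (φ : F →+* F) {s : ℕ} (H H' : Matrix (Fin s) (Fin s) F) : Prop :=
  ∃ T : Matrix (Fin s) (Fin s) F, IsUnit T ∧ T * H * (T.map φ)ᵀ = H'

variable (φ : F →+* F) {s : ℕ}

lemma cong_refl (H : Matrix (Fin s) (Fin s) F) : Cong φ H H :=
  ⟨1, isUnit_one, by simp⟩

lemma cong_trans {H H' H'' : Matrix (Fin s) (Fin s) F} (h1 : Cong φ H H')
    (h2 : Cong φ H' H'') : Cong φ H H'' := by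
  obtain ⟨T, hT, rfl⟩ := h1
  obtain ⟨T', hT', rfl⟩ := h2
  refine ⟨T' * T, hT'.mul hT, ?_⟩
  rw [Matrix.map_mul, transpose_mul]
  noncomm_ring

lemma isUnit_map {T : Matrix (Fin s) (Fin s) F} (hT : IsUnit T) : IsUnit (T.map φ) := by
  rw [Matrix.isUnit_iff_isUnit_det] at hT ⊢
  have hd : (T.map φ).det = φ T.det := (RingHom.map_det φ T).symm
  rw [hd, isUnit_iff_ne_zero] at *
  exact fun h => hT ((map_eq_zero_iff φ φ.injective).mp h)

lemma cong_symm {H H' : Matrix (Fin s) (Fin s) F} (h : Cong φ H H') : Cong φ H' H := by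
  obtain ⟨T, hT, rfl⟩ := h
  have hTd : IsUnit T.det := (Matrix.isUnit_iff_isUnit_det T).mp hT
  have hTφ : IsUnit (T.map φ).det := (Matrix.isUnit_iff_isUnit_det _).mp (isUnit_map φ hT)
  refine ⟨T⁻¹, ?_, ?_⟩
  · exact Matrix.isUnit_nonsing_inv_iff.mpr hT
  · have hmapinv : (T⁻¹).map φ = (T.map φ)⁻¹ := by
      refine (Matrix.inv_eq_right_inv ?_).symm
      rw [← Matrix.map_mul, Matrix.mul_nonsing_inv _ hTd]
      simp
    rw [hmapinv, Matrix.transpose_nonsing_inv]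
    calc T⁻¹ * (T * H * (T.map φ)ᵀ) * ((T.map φ)ᵀ)⁻¹
        = (T⁻¹ * T) * H * ((T.map φ)ᵀ * ((T.map φ)ᵀ)⁻¹) := by noncomm_ring
      _ = H := by
          rw [Matrix.nonsing_inv_mul _ hTd, Matrix.mul_nonsing_inv, one_mul, mul_one]
          rwa [Matrix.det_transpose]

lemma cong_isUnit {H H' : Matrix (Fin s) (Fin s) F} (h : Cong φ H H') (hH : IsUnit H) :
    IsUnit H' := by
  obtain ⟨T, hT, rfl⟩ := h
  exact (hT.mul hH).mul <| (Matrix.isUnit_iff_isUnit_det _).mpr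
    (by rw [Matrix.det_transpose]; exact (Matrix.isUnit_iff_isUnit_det _).mp (isUnit_map φ hT))

lemma cong_herm (hinv : ∀ a, φ (φ a) = a) {H H' : Matrix (Fin s) (Fin s) F}
    (h : Cong φ H H') (hH : H = (H.map φ)ᵀ) : H' = (H'.map φ)ᵀ := by
  obtain ⟨T, hT, rfl⟩ := h
  have hmapmap : ∀ M : Matrix (Fin s) (Fin s) F, (M.map φ).map φ = M := by
    intro M; ext i j; simp [hinv]
  conv_rhs => rw [Matrix.map_mul, Matrix.map_mul, transpose_mul, transpose_mul,
    Matrix.transpose_map, hmapmap, transpose_transpose, ← hH]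
  noncomm_ring

end Stmt3Aux
namespace Stmt3Aux2

variable {F : Type*} [Field F] (φ : F →+* F) {s : ℕ}

/-- Permutation matrix. -/
def permM (σ : Equiv.Perm (Fin s)) : Matrix (Fin s) (Fin s) F :=
  of fun i j => if σ i = j then 1 else 0

lemma permM_mul_apply (σ : Equiv.Perm (Fin s)) (M : Matrix (Fin s) (Fin s) F) (i j) :
    (permM (F := F) σ * M) i j = M (σ i) j := by
  simp [permM, Matrix.mul_apply, ite_mul, Finset.sum_ite_eq]

lemma mul_permM_t (σ : Equiv.Perm (Fin s)) (M : Matrix (Fin s) (Fin s) F) (i j) :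
    (M * (permM (F := F) σ)ᵀ) i j = M i (σ j) := by
  simp [permM, Matrix.mul_apply, mul_ite, Finset.sum_ite_eq']

lemma permM_map (σ : Equiv.Perm (Fin s)) : (permM (F := F) σ).map φ = permM σ := by
  ext i j; by_cases h : σ i = j <;> simp [permM, h]

lemma isUnit_permM (σ : Equiv.Perm (Fin s)) : IsUnit (permM (F := F) σ) := by
  refine (Matrix.isUnit_iff_isUnit_det _).mpr (Matrix.isUnit_det_of_right_inverse (B := permM σ⁻¹) ?_)
  ext i j
  rw [permM_mul_apply]
  simp [permM, Matrix.one_apply]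

lemma cong_perm (σ : Equiv.Perm (Fin s)) (M : Matrix (Fin s) (Fin s) F) :
    Stmt3Aux.Cong φ M (of fun a b => M (σ a) (σ b)) := by
  refine ⟨permM σ, isUnit_permM σ, ?_⟩
  ext a b
  rw [permM_map, mul_permM_t, permM_mul_apply, of_apply]

variable {t : ℕ}

/-- Column-operation matrix: identity plus stuff in column `0`. -/
def colM (w : Fin (t+1) → F) : Matrix (Fin (t+1)) (Fin (t+1)) F :=
  1 + of fun i j => if j = 0 then w i else 0

lemma colM_mul_apply (w : Fin (t+1) → F) (M : Matrix (Fin (t+1)) (Fin (t+1)) F) (i j) :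
    (colM w * M) i j = M i j + w i * M 0 j := by
  simp [colM, Matrix.mul_apply, Matrix.add_apply, Matrix.one_apply, add_mul, ite_mul,
    Finset.sum_add_distrib, Finset.sum_ite_eq, Finset.sum_ite_eq']

lemma mul_colM_t (v : Fin (t+1) → F) (M : Matrix (Fin (t+1)) (Fin (t+1)) F) (i j) :
    (M * (colM v)ᵀ) i j = M i j + M i 0 * v j := by
  simp [colM, Matrix.mul_apply, Matrix.add_apply, Matrix.one_apply, mul_add, mul_ite,
    Finset.sum_add_distrib, Finset.sum_ite_eq, Finset.sum_ite_eq']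

lemma colM_map (w : Fin (t+1) → F) : (colM w).map φ = colM (φ ∘ w) := by
  ext i j
  by_cases h : j = 0 <;> by_cases h2 : i = j <;>
    simp [colM, Matrix.one_apply, h, h2]

lemma isUnit_colM (w : Fin (t+1) → F) (hw : 1 + w 0 ≠ 0) : IsUnit (colM w) := by
  refine (Matrix.isUnit_iff_isUnit_det _).mpr
    (Matrix.isUnit_det_of_right_inverse (B := colM (fun i => -(1 + w 0)⁻¹ * w i)) ?_)
  ext i j
  rw [colM_mul_apply]
  simp only [colM, Matrix.add_apply, of_apply]
  by_cases h : j = 0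
  · subst h
    by_cases h2 : i = 0
    · subst h2
      simp only [Matrix.one_apply, if_pos rfl, if_true]
      field_simp
      ring
    · simp only [Matrix.one_apply, if_pos rfl, if_neg h2, if_true]
      field_simp
      ring
  · have h0 : ¬ (0 : Fin (t+1)) = j := fun hh => h hh.symm
    simp [Matrix.one_apply, h, h0]

lemma cong_col (w : Fin (t+1) → F) (hw : 1 + w 0 ≠ 0) (M : Matrix (Fin (t+1)) (Fin (t+1)) F) :
    Stmt3Aux.Cong φ M
      (of fun i j => M i j + w i * M 0 j + (M i 0 + w i * M 0 0) * φ (w j)) := by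
  refine ⟨colM w, isUnit_colM w hw, ?_⟩
  ext i j
  rw [colM_map, mul_colM_t, colM_mul_apply, colM_mul_apply, of_apply]
  simp only [Function.comp_apply]
  try ring

end Stmt3Aux2
namespace Stmt3Aux3
open Stmt3Aux Stmt3Aux2

variable {F : Type*} [Field F] (φ : F →+* F)

lemma trace_exists (hlam : ∃ l : F, φ l ≠ l) : ∃ μ : F, μ + φ μ ≠ 0 := by
  by_contra hc
  push_neg at hc
  have hneg : ∀ μ : F, φ μ = -μ := fun μ => eq_neg_of_add_eq_zero_right (hc μ)
  obtain ⟨l, hl⟩ := hlam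
  have h1 : (1 : F) = -1 := (_root_.map_one φ).symm.trans (hneg 1)
  have h2 : (2 : F) = 0 := by linear_combination h1
  apply hl
  rw [hneg l]
  linear_combination -l * h2

lemma hermApply {s : ℕ} {M : Matrix (Fin s) (Fin s) F} (hM : M = (M.map φ)ᵀ) (i j : Fin s) :
    M i j = φ (M j i) := by
  conv_lhs => rw [hM]
  rfl

lemma key (hinv : ∀ a, φ (φ a) = a) (hlam : ∃ l : F, φ l ≠ l)
    (hnorm : ∀ a : F, a ≠ 0 → φ a = a → ∃ c, c ≠ 0 ∧ c * φ c = a) :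
    ∀ m (H : Matrix (Fin m) (Fin m) F), IsUnit H → H = (H.map φ)ᵀ →
      Cong φ 1 H := by
  intro m
  induction m with
  | zero =>
    intro H _ _
    exact ⟨1, isUnit_one, by ext i j; exact i.elim0⟩
  | succ t IH =>
    intro H hH hHerm
    -- Step A : find M₁ congruent to H with M₁ 0 0 ≠ 0
    have stepA : ∃ M₁ : Matrix (Fin (t+1)) (Fin (t+1)) F, Cong φ H M₁ ∧ M₁ 0 0 ≠ 0 := by
      have hne : ∃ i j, H i j ≠ 0 := by
        by_contra hc
        push_neg at hc
        have : H = 0 := by ext i j; exact hc i j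
        rw [this, isUnit_zero_iff] at hH
        have := congrFun (congrFun hH 0) 0
        simp [Matrix.one_apply] at this
      by_cases hdiag : ∃ k, H k k ≠ 0
      · obtain ⟨k, hk⟩ := hdiag
        refine ⟨of fun a b => H (Equiv.swap 0 k a) (Equiv.swap 0 k b),
          cong_perm φ _ H, ?_⟩
        simpa [Equiv.swap_apply_left] using hk
      · push_neg at hdiag
        obtain ⟨i, j, hij⟩ := hne
        have hij_ne : i ≠ j := by
          rintro rfl; exact hij (hdiag i)
        obtain ⟨t', rfl⟩ : ∃ t', t = t' + 1 := by
          cases t with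
          | zero =>
            have hi := i.isLt
            have hj := j.isLt
            exact absurd (Fin.ext (by omega)) hij_ne
          | succ t' => exact ⟨t', rfl⟩
        have h01 : (0 : Fin (t'+2)) ≠ 1 := Fin.zero_ne_one
        -- permutation sending 0 ↦ i, 1 ↦ j
        set τ : Equiv.Perm (Fin (t'+2)) := Equiv.swap 0 i with hτ
        have hj1 : τ j ≠ 0 := by
          intro h0
          apply hij_ne
          have := congrArg τ h0
          rw [Equiv.swap_apply_self] at this
          rw [this, hτ, Equiv.swap_apply_left]
        set σ : Equiv.Perm (Fin (t'+2)) := τ * Equiv.swap 1 (τ j) with hσ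
        have hσ0 : σ 0 = i := by
          rw [hσ]
          simp only [Equiv.Perm.mul_apply]
          rw [Equiv.swap_apply_of_ne_of_ne h01 (fun h => hj1 h.symm), hτ,
            Equiv.swap_apply_left]
        have hσ1 : σ 1 = j := by
          rw [hσ]
          simp only [Equiv.Perm.mul_apply]
          rw [Equiv.swap_apply_left, hτ, Equiv.swap_apply_self]
        set M₀ : Matrix (Fin (t'+2)) (Fin (t'+2)) F := of fun a b => H (σ a) (σ b) with hM₀
        have hcong0 : Cong φ H M₀ := cong_perm φ σ H
        have hM₀herm : M₀ = (M₀.map φ)ᵀ := cong_herm φ hinv hcong0 hHerm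
        have hM₀01 : M₀ 0 1 ≠ 0 := by simpa [hM₀, hσ0, hσ1] using hij
        have hM₀00 : M₀ 0 0 = 0 := by simp [hM₀, hσ0, hdiag]
        have hM₀11 : M₀ 1 1 = 0 := by simp [hM₀, hσ1, hdiag]
        obtain ⟨μ, hμ⟩ := trace_exists φ hlam
        set lam : F := (M₀ 0 1)⁻¹ * μ with hlam'
        set w : Fin (t'+2) → F := fun k => if k = 1 then lam else 0 with hw
        have hw0 : w 0 = 0 := by rw [hw]; simp [h01]
        have hwne : 1 + w 0 ≠ 0 := by rw [hw0]; simp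
        have hcong1 := cong_col φ w hwne M₀
        set M₀' := of fun i j => M₀ i j + w i * M₀ 0 j + (M₀ i 0 + w i * M₀ 0 0) * φ (w j)
          with hM₀'
        have hM₀'11 : M₀' 1 1 ≠ 0 := by
          have hw1 : w 1 = lam := by rw [hw]; simp
          have h10 : M₀ 1 0 = φ (M₀ 0 1) := hermApply φ hM₀herm 1 0
          have : M₀' 1 1 = lam * M₀ 0 1 + φ (lam * M₀ 0 1) := by
            rw [hM₀']
            simp only [of_apply, hw1, hM₀11, hM₀00, h10, mul_zero, add_zero, zero_add,
              _root_.map_mul]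
            ring
          have hlm : lam * M₀ 0 1 = μ := by
            rw [hlam']; field_simp
          rw [this, hlm]
          exact hμ
        refine ⟨of fun a b => M₀' (Equiv.swap 0 1 a) (Equiv.swap 0 1 b),
          cong_trans φ (cong_trans φ hcong0 hcong1) (cong_perm φ _ M₀'), ?_⟩
        simpa [Equiv.swap_apply_left] using hM₀'11
    obtain ⟨M₁, hcongA, hM₁00⟩ := stepA
    have hM₁herm : M₁ = (M₁.map φ)ᵀ := cong_herm φ hinv hcongA hHerm
    -- Step B : rescale so that the (0,0) entry is 1
    have hfix : φ (M₁ 0 0) = M₁ 0 0 := (hermApply φ hM₁herm 0 0).symm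
    obtain ⟨c, hc0, hcc⟩ := hnorm (M₁ 0 0) hM₁00 hfix
    have hφc : φ c ≠ 0 := fun h => hc0 ((map_eq_zero_iff φ φ.injective).mp h)
    set wB : Fin (t+1) → F := fun i => if i = 0 then c⁻¹ - 1 else 0 with hwB
    have hwB0 : wB 0 = c⁻¹ - 1 := by rw [hwB]; simp
    have hwBne : 1 + wB 0 ≠ 0 := by rw [hwB0]; simpa using inv_ne_zero hc0
    have hcongB := cong_col φ wB hwBne M₁
    set M₂ := of fun i j => M₁ i j + wB i * M₁ 0 j + (M₁ i 0 + wB i * M₁ 0 0) * φ (wB j)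
      with hM₂
    have hM₂00 : M₂ 0 0 = 1 := by
      rw [hM₂]
      simp only [of_apply, hwB0]
      have : φ (c⁻¹ - 1) = (φ c)⁻¹ - 1 := by rw [map_sub, map_inv₀, φ.map_one]
      rw [this]
      field_simp
      linear_combination hcc.symm
    have hcongHM₂ : Cong φ H M₂ := cong_trans φ hcongA hcongB
    -- Step C : clear first row and column
    set wC : Fin (t+1) → F := fun i => if i = 0 then 0 else -(M₂ i 0) with hwC
    have hwC0 : wC 0 = 0 := by rw [hwC]; simp
    have hwCne : 1 + wC 0 ≠ 0 := by rw [hwC0]; simp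
    have hcongC := cong_col φ wC hwCne M₂
    set N := of fun i j => M₂ i j + wC i * M₂ 0 j + (M₂ i 0 + wC i * M₂ 0 0) * φ (wC j)
      with hNdef
    have hcongHN : Cong φ H N := cong_trans φ hcongHM₂ hcongC
    have hNherm : N = (N.map φ)ᵀ := cong_herm φ hinv hcongHN hHerm
    have hN00 : N 0 0 = 1 := by
      rw [hNdef]; simp [hwC0, hM₂00]
    have hNs0 : ∀ i : Fin t, N i.succ 0 = 0 := by
      intro i
      have hsne : (i.succ : Fin (t+1)) ≠ 0 := Fin.succ_ne_zero i
      rw [hNdef]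
      simp only [of_apply, hwC0, map_zero, mul_zero, add_zero]
      rw [hwC]
      simp [hsne, hM₂00]
    have hN0s : ∀ j : Fin t, N 0 j.succ = 0 := fun j => by
      rw [hermApply φ hNherm 0 j.succ, hNs0 j, map_zero]
    -- Step D : the lower-right minor
    set H₁ : Matrix (Fin t) (Fin t) F := of fun i j => N i.succ j.succ with hH₁
    have hH₁herm : H₁ = (H₁.map φ)ᵀ := by
      ext i j
      show N i.succ j.succ = φ (H₁ j i)
      rw [hermApply φ hNherm i.succ j.succ]
      rfl
    have hNunit : IsUnit N := cong_isUnit φ hcongHN hH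
    have hH₁unit : IsUnit H₁ := by
      rw [Matrix.isUnit_iff_isUnit_det] at hNunit ⊢
      have hsub : N.submatrix (Fin.succAbove 0) Fin.succ = H₁ := by
        ext i j
        simp [Matrix.submatrix_apply, Fin.succAbove_zero, hH₁]
      have hdet : N.det = H₁.det := by
        rw [Matrix.det_succ_column_zero, Finset.sum_eq_single 0]
        · rw [hN00, hsub]; simp
        · intro b _ hb
          obtain ⟨b', rfl⟩ := Fin.eq_succ_of_ne_zero hb
          rw [hNs0]; ring
        · intro h; exact absurd (Finset.mem_univ 0) h
      rwa [hdet] at hNunit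
    obtain ⟨A₁, hA₁unit, hA₁eq⟩ := IH H₁ hH₁unit hH₁herm
    rw [mul_one] at hA₁eq
    -- Step E : assemble the block matrix
    set A₂ : Matrix (Fin (t+1)) (Fin (t+1)) F :=
      of (Fin.cons (Fin.cons 1 0) (fun i => Fin.cons 0 (A₁ i))) with hA₂
    have e00 : A₂ 0 0 = 1 := by rw [hA₂]; simp
    have e0s : ∀ j : Fin t, A₂ 0 j.succ = 0 := fun j => by rw [hA₂]; simp
    have es0 : ∀ i : Fin t, A₂ i.succ 0 = 0 := fun i => by rw [hA₂]; simp
    have ess : ∀ i j : Fin t, A₂ i.succ j.succ = A₁ i j := fun i j => by rw [hA₂]; simp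
    have hA₂unit : IsUnit A₂ := by
      have hA₁det : IsUnit A₁.det := (Matrix.isUnit_iff_isUnit_det _).mp hA₁unit
      have hA₁B : A₁ * A₁⁻¹ = 1 := Matrix.mul_nonsing_inv _ hA₁det
      set B₂ : Matrix (Fin (t+1)) (Fin (t+1)) F :=
        of (Fin.cons (Fin.cons 1 0) (fun i => Fin.cons 0 (A₁⁻¹ i))) with hB₂
      have f00 : B₂ 0 0 = 1 := by rw [hB₂]; simp
      have f0s : ∀ j : Fin t, B₂ 0 j.succ = 0 := fun j => by rw [hB₂]; simp
      have fs0 : ∀ i : Fin t, B₂ i.succ 0 = 0 := fun i => by rw [hB₂]; simp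
      have fss : ∀ i j : Fin t, B₂ i.succ j.succ = A₁⁻¹ i j := fun i j => by rw [hB₂]; simp
      refine (Matrix.isUnit_iff_isUnit_det _).mpr
        (Matrix.isUnit_det_of_right_inverse (B := B₂) ?_)
      ext i j
      rw [Matrix.mul_apply, Fin.sum_univ_succ]
      rcases Fin.eq_zero_or_eq_succ i with rfl | ⟨i', rfl⟩ <;>
        rcases Fin.eq_zero_or_eq_succ j with rfl | ⟨j', rfl⟩
      · simp [e00, e0s, f00, Matrix.one_apply]
      · simp [e00, e0s, f0s, fs0, Matrix.one_apply, (Fin.succ_ne_zero j').symm]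
      · simp [es0, f00, fs0, fss, Matrix.one_apply, Fin.succ_ne_zero i']
      · have := congrFun (congrFun hA₁B i') j'
        rw [Matrix.mul_apply] at this
        simp only [es0, ess, f0s, fss, zero_mul, zero_add]
        rw [this]
        by_cases hij : i' = j'
        · subst hij; simp [Matrix.one_apply]
        · simp [Matrix.one_apply, hij, fun h => hij (Fin.succ_inj.mp h)]
    have hA₂eq : A₂ * 1 * (A₂.map φ)ᵀ = N := by
      rw [mul_one]
      ext i j
      rw [Matrix.mul_apply, Fin.sum_univ_succ]
      simp only [Matrix.transpose_apply, Matrix.map_apply]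
      rcases Fin.eq_zero_or_eq_succ i with rfl | ⟨i', rfl⟩ <;>
        rcases Fin.eq_zero_or_eq_succ j with rfl | ⟨j', rfl⟩
      · simp [e00, e0s, hN00]
      · simp [e00, e0s, es0, hN0s j']
      · simp [es0, ess, e00, e0s, hNs0 i']
      · have := congrFun (congrFun hA₁eq i') j'
        rw [Matrix.mul_apply] at this
        simp only [Matrix.transpose_apply, Matrix.map_apply] at this
        simp only [es0, e0s, ess, map_zero, zero_mul, mul_zero, zero_add]
        rw [this]
        show H₁ i' j' = N i'.succ j'.succ
        rw [hH₁]
        rfl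
    exact cong_trans φ ⟨A₂, hA₂unit, hA₂eq⟩ (cong_symm φ hcongHN)

end Stmt3Aux3
/-- For any two invertible Hermitian matrices `H, H'` over `𝔽_{q²}` there is
`T ∈ GL_{n+1}(𝔽_{q²})` with `T ⬝ H ⬝ (conj T)ᵀ = H'`. -/
theorem stmt_3 (p ν n q : ℕ) [Fact p.Prime] (hν : 0 < ν) (hn : 1 ≤ n) (hq : q = p ^ ν)
    (H H' : Matrix (Fin (n + 1)) (Fin (n + 1)) (GaloisField p (2 * ν)))
    (hH : IsUnit H) (hH' : IsUnit H')
    (hHerm : H = (H.map fun a => a ^ q).transpose)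
    (hHerm' : H' = (H'.map fun a => a ^ q).transpose) :
    ∃ T : Matrix (Fin (n + 1)) (Fin (n + 1)) (GaloisField p (2 * ν)),
      IsUnit T ∧ T * H * (T.map fun a => a ^ q).transpose = H' := by
  subst hq
  letI : Fintype (GaloisField p (2 * ν)) := Fintype.ofFinite _
  letI : DecidableEq (GaloisField p (2 * ν)) := Classical.decEq _
  have hp2 : 2 ≤ p := (Fact.out : p.Prime).two_le
  have hq2 : 2 ≤ p ^ ν := Nat.one_lt_pow (by omega) (by omega)
  set φ : GaloisField p (2 * ν) →+* GaloisField p (2 * ν) :=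
    iterateFrobenius (GaloisField p (2 * ν)) p ν with hφdef
  have hφ : ∀ a : GaloisField p (2 * ν), φ a = a ^ p ^ ν := fun a => rfl
  have hcardF : Fintype.card (GaloisField p (2 * ν)) = p ^ ν * p ^ ν := by
    rw [← Nat.card_eq_fintype_card, GaloisField.card p (2 * ν) (by omega), ← pow_add]
    congr 1
    omega
  have hinv : ∀ a : GaloisField p (2 * ν), φ (φ a) = a := by
    intro a
    rw [hφ, hφ, ← pow_mul, ← hcardF]
    exact FiniteField.pow_card a
  obtain ⟨g, hg⟩ := IsCyclic.exists_generator (α := (GaloisField p (2 * ν))ˣ)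
  have hcardU : Fintype.card (GaloisField p (2 * ν))ˣ = p ^ ν * p ^ ν - 1 := by
    rw [Fintype.card_units, hcardF]
  have horder : orderOf g = p ^ ν * p ^ ν - 1 := by
    rw [orderOf_eq_card_of_forall_mem_zpowers hg, Nat.card_eq_fintype_card, hcardU]
  have hlam : ∃ l : GaloisField p (2 * ν), φ l ≠ l := by
    refine ⟨(g : GaloisField p (2 * ν)), ?_⟩
    rw [hφ]
    intro hgq
    have hgu : g ^ p ^ ν = g := Units.ext (by rw [Units.val_pow_eq_pow_val]; exact hgq)
    have h1 : g ^ (p ^ ν - 1) = 1 := by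
      have hqs : p ^ ν - 1 + 1 = p ^ ν := by omega
      rw [← hqs, pow_succ] at hgu
      exact mul_right_cancel (hgu.trans (one_mul g).symm)
    have hdvd := orderOf_dvd_of_pow_eq_one h1
    rw [horder] at hdvd
    have hle := Nat.le_of_dvd (by omega) hdvd
    have hlt : p ^ ν < p ^ ν * p ^ ν := by
      calc p ^ ν = 1 * p ^ ν := (one_mul _).symm
      _ < p ^ ν * p ^ ν := by
        apply Nat.mul_lt_mul_of_lt_of_le (by omega) (le_refl _) (by omega)
    omega
  have hnorm : ∀ a : GaloisField p (2 * ν), a ≠ 0 → φ a = a →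
      ∃ c, c ≠ 0 ∧ c * φ c = a := by
    intro a ha hfix
    rw [hφ] at hfix
    set u : (GaloisField p (2 * ν))ˣ := Units.mk0 a ha with hu
    obtain ⟨k, hk⟩ : ∃ k : ℕ, g ^ k = u := by
      rw [← Submonoid.mem_powers_iff, mem_powers_iff_mem_zpowers]
      exact hg u
    have ha1 : a ^ (p ^ ν - 1) = 1 := by
      have hqs : p ^ ν - 1 + 1 = p ^ ν := by omega
      rw [← hqs, pow_succ] at hfix
      exact mul_right_cancel₀ ha (hfix.trans (one_mul a).symm)
    have hu1 : u ^ (p ^ ν - 1) = 1 := Units.ext (by rw [Units.val_pow_eq_pow_val]; exact ha1)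
    have hg1 : g ^ (k * (p ^ ν - 1)) = 1 := by rw [pow_mul, hk, hu1]
    have hdvd := orderOf_dvd_of_pow_eq_one hg1
    rw [horder] at hdvd
    have hfact : p ^ ν * p ^ ν - 1 = (p ^ ν + 1) * (p ^ ν - 1) := by
      obtain ⟨s, hs⟩ : ∃ s, p ^ ν = s + 1 := ⟨p ^ ν - 1, by omega⟩
      rw [hs]
      have h : (s + 1 + 1) * (s + 1 - 1) + 1 = (s + 1) * (s + 1) := by
        simp only [Nat.add_sub_cancel]
        ring
      exact (Nat.sub_eq_of_eq_add h.symm)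
    rw [hfact] at hdvd
    obtain ⟨m, rfl⟩ : p ^ ν + 1 ∣ k :=
      (Nat.mul_dvd_mul_iff_right (show 0 < p ^ ν - 1 by omega)).mp hdvd
    refine ⟨((g ^ m : (GaloisField p (2 * ν))ˣ) : GaloisField p (2 * ν)), Units.ne_zero _, ?_⟩
    rw [hφ, ← Units.val_pow_eq_pow_val, ← Units.val_mul, ← pow_succ', ← pow_mul]
    rw [show m * (p ^ ν + 1) = (p ^ ν + 1) * m from mul_comm _ _, hk]
    rfl
  have hφfun : (fun a : GaloisField p (2 * ν) => a ^ p ^ ν) = ⇑φ := by funext a; rw [hφ a]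
  rw [hφfun] at hHerm hHerm'
  obtain ⟨A, hAunit, hAeq⟩ := Stmt3Aux3.key φ hinv hlam hnorm (n + 1) H hH hHerm
  obtain ⟨A', hA'unit, hA'eq⟩ := Stmt3Aux3.key φ hinv hlam hnorm (n + 1) H' hH' hHerm'
  have hcong : Stmt3Aux.Cong φ H H' :=
    Stmt3Aux.cong_trans φ (Stmt3Aux.cong_symm φ ⟨A, hAunit, hAeq⟩) ⟨A', hA'unit, hA'eq⟩
  obtain ⟨T, hTunit, hTeq⟩ := hcong
  exact ⟨T, hTunit, by rw [hφfun]; exact hTeq⟩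
end

section
/- Let p be a prime, q = p^ν, and let k be an algebraically closed field of characteristic p containing 𝔽_{q²}. Let n ≥ 2 satisfy n ≢ 0 (mod p) and 2n ≤ q. Let A = (a_{ij})_{0 ≤ i,j ≤ n} be a matrix over k and let h = Σ_{ν=1}^{q} b_ν t^ν ∈ k[t] with b_1 ≠ 0 and b_q ≠ 0, such that Σ_{i,j} a_{ij} t^{i+qj} = h^n in k[t]. Then b_μ = 0 for all μ with n < μ < q. -/
open Polynomial

private lemma exp_ne_aux (n q i j μ : ℕ) (hn : 2 ≤ n) (hin : i ≤ n) (hjn : j ≤ n)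
    (hμn : n < μ) (hμq : μ < q) (h2n : 2 * n ≤ q) : i + q * j ≠ q * (n - 1) + μ := by
  intro h
  rcases le_or_gt j (n - 1) with hj | hj
  · have h1 : q * j ≤ q * (n - 1) := Nat.mul_le_mul_left q hj
    omega
  · have hj' : j = n := by omega
    rw [hj'] at h
    have h2 : q * (n - 1) + q = q * n := by
      rw [← Nat.mul_succ]; congr 1; omega
    omega

open Polynomial in
/-- If `Σ aᵢⱼ t^{i+qj} = hⁿ` with `h = Σ_{μ=1}^{q} b_μ t^μ`, `b_1 ≠ 0`, `b_q ≠ 0`,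
`p ∤ n` and `2n ≤ q`, then `b_μ = 0` for `n < μ < q`. -/
theorem stmt_8 (p ν n q : ℕ) [Fact p.Prime] (hν : 0 < ν) (hq : q = p ^ ν)
    (k : Type*) [Field k] [IsAlgClosed k] [CharP k p] [Algebra (GaloisField p (2 * ν)) k]
    (hn : 2 ≤ n) (hnp : ¬ p ∣ n) (h2n : 2 * n ≤ q)
    (A : Matrix (Fin (n + 1)) (Fin (n + 1)) k) (b : ℕ → k)
    (hb1 : b 1 ≠ 0) (hbq : b q ≠ 0)
    (heq : (∑ i : Fin (n + 1), ∑ j : Fin (n + 1), C (A i j) * X ^ ((i : ℕ) + q * (j : ℕ)))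
        = (∑ μ ∈ Finset.Icc 1 q, C (b μ) * X ^ μ) ^ n) :
    ∀ μ : ℕ, n < μ → μ < q → b μ = 0 := by
  classical
  by_contra hcon
  push_neg at hcon
  obtain ⟨μ₀, hμ₀n, hμ₀q, hb₀⟩ := hcon
  set S := (Finset.Ioo n q).filter (fun m => b m ≠ 0) with hS
  have hSne : S.Nonempty :=
    ⟨μ₀, by simp only [hS, Finset.mem_filter, Finset.mem_Ioo]; exact ⟨⟨hμ₀n, hμ₀q⟩, hb₀⟩⟩
  set μ := S.max' hSne with hμdef
  have hμS : μ ∈ S := S.max'_mem hSne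
  rw [hS, Finset.mem_filter, Finset.mem_Ioo] at hμS
  obtain ⟨⟨hμn, hμq⟩, hbμ⟩ := hμS
  have hmax : ∀ m, μ < m → m < q → b m = 0 := by
    intro m h1 h2
    by_contra hbm
    have hmS : m ∈ S := by
      rw [hS, Finset.mem_filter, Finset.mem_Ioo]; exact ⟨⟨by omega, h2⟩, hbm⟩
    exact absurd (S.le_max' m hmS) (not_le.mpr h1)
  -- split off the top term of h
  set f : k[X] := ∑ i ∈ Finset.Icc 1 (q - 1), C (b i) * X ^ i with hf
  have hq4 : 4 ≤ q := by omega
  have hsplit : (∑ m ∈ Finset.Icc 1 q, C (b m) * X ^ m) = f + C (b q) * X ^ q := by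
    have hq' : q = (q - 1) + 1 := by omega
    rw [hf, hq', Finset.sum_Icc_succ_top (by omega)]; simp
  have hdegf : f.natDegree ≤ μ := by
    apply natDegree_sum_le_of_forall_le
    intro i hi
    rcases le_or_gt i μ with h | h
    · exact le_trans (natDegree_C_mul_X_pow_le _ _) h
    · rw [Finset.mem_Icc] at hi
      have : b i = 0 := hmax i h (by omega)
      simp [this]
  have hcoefff : f.coeff μ = b μ := by
    rw [hf, finset_sum_coeff]
    rw [Finset.sum_eq_single μ]
    · simp
    · intro i _ hne
      simp only [coeff_C_mul, coeff_X_pow]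
      rw [if_neg (fun hh => hne hh.symm)]
      ring
    · intro h
      exact absurd (Finset.mem_Icc.mpr ⟨by omega, by omega⟩) h
  -- the exponent
  set e := q * (n - 1) + μ with he
  clear_value e
  -- LHS coefficient is 0
  have hL : (∑ i : Fin (n + 1), ∑ j : Fin (n + 1),
      C (A i j) * X ^ ((i : ℕ) + q * (j : ℕ))).coeff e = 0 := by
    rw [Polynomial.finset_sum_coeff]
    apply Finset.sum_eq_zero
    intro i _
    rw [Polynomial.finset_sum_coeff]
    apply Finset.sum_eq_zero
    intro j _
    rw [coeff_C_mul, coeff_X_pow]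
    rw [if_neg, mul_zero]
    intro hcontra
    rw [he] at hcontra
    exact exp_ne_aux n q i j μ hn (by omega) (by omega) hμn hμq h2n hcontra.symm
  -- RHS coefficient
  have hqn : q * n = q * (n - 1) + q := by
    rw [← Nat.mul_succ]; congr 1; omega
  have key : ∀ m : ℕ, (f ^ m * (C (b q) * X ^ q) ^ (n - m) * ((n.choose m : ℕ) : k[X])).coeff e
      = (n.choose m : k) * b q ^ (n - m) *
        (if q * (n - m) ≤ e then (f ^ m).coeff (e - q * (n - m)) else 0) := by
    intro m
    have hrw : f ^ m * (C (b q) * X ^ q) ^ (n - m) * ((n.choose m : ℕ) : k[X])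
        = C ((n.choose m : k) * b q ^ (n - m)) * (f ^ m * X ^ (q * (n - m))) := by
      rw [mul_pow, ← C_pow, ← pow_mul, C_mul, Polynomial.C_eq_natCast]
      ring
    rw [hrw, coeff_C_mul, coeff_mul_X_pow']
  have hR : ((f + C (b q) * X ^ q) ^ n).coeff e = (n : k) * b q ^ (n - 1) * b μ := by
    rw [add_pow, finset_sum_coeff]
    rw [Finset.sum_eq_single 1]
    · rw [key 1]
      have hc : q * (n - 1) ≤ e := by omega
      rw [if_pos hc]
      have he1 : e - q * (n - 1) = μ := by omega
      rw [he1, pow_one, hcoefff, Nat.choose_one_right]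
    · intro m hm hm1
      rw [Finset.mem_range] at hm
      rw [key m]
      rcases Nat.eq_zero_or_pos m with hm0 | hmpos
      · subst hm0
        simp only [Nat.sub_zero]
        rw [if_neg (by omega), mul_zero]
      · have hm2 : 2 ≤ m := by omega
        have hmn : m ≤ n := by omega
        by_cases hc : q * (n - m) ≤ e
        · rw [if_pos hc]
          have e1 : q * (n - 1) = q * (n - m) + q * (m - 1) := by
            rw [← Nat.mul_add]; congr 1; omega
          have e2 : m * μ = (m - 1) * μ + μ := by
            cases m with
            | zero => omega
            | succ mm => simp [Nat.succ_mul]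
          have e3 : (m - 1) * μ < (m - 1) * q :=
            Nat.mul_lt_mul_of_le_of_lt (le_refl _) hμq (by omega)
          have e4 : (m - 1) * q = q * (m - 1) := Nat.mul_comm _ _
          have hdeg : (f ^ m).natDegree < e - q * (n - m) := by
            have d1 : (f ^ m).natDegree ≤ m * f.natDegree := natDegree_pow_le
            have d2 : m * f.natDegree ≤ m * μ := Nat.mul_le_mul_left m hdegf
            omega
          rw [coeff_eq_zero_of_natDegree_lt hdeg, mul_zero]
        · rw [if_neg hc, mul_zero]
    · intro hh
      exact absurd (Finset.mem_range.mpr (by omega)) hh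
  rw [hsplit] at heq
  have hcoe := congrArg (fun P : k[X] => P.coeff e) heq
  rw [hL, hR] at hcoe
  have hn0 : (n : k) ≠ 0 := fun hh => hnp ((CharP.cast_eq_zero_iff k p n).mp hh)
  exact mul_ne_zero (mul_ne_zero hn0 (pow_ne_zero _ hbq)) hbμ hcoe.symm
end

section
/- Let p be a prime, q = p^ν, and let k be an algebraically closed field of characteristic p containing 𝔽_{q²}. Let n ≥ 2 satisfy n ≢ 0 (mod p) and 2n ≤ q. Let A = (a_{ij})_{0 ≤ i,j ≤ n} be a matrix over k and let h = Σ_{ν=1}^{q} b_ν t^ν ∈ k[t] with b_1 ≠ 0 and b_q ≠ 0, such that Σ_{i,j} a_{ij} t^{i+qj} = h^n in k[t]. Then b_μ = 0 for all μ with 1 < μ < q − n + 1. -/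
open Polynomial in
/-- If `Σ aᵢⱼ t^{i+qj} = hⁿ` with `h = Σ_{μ=1}^{q} b_μ t^μ`, `b_1 ≠ 0`, `b_q ≠ 0`,
`p ∤ n` and `2n ≤ q`, then `b_μ = 0` for `1 < μ < q - n + 1`. -/
theorem stmt_9 (p ν n q : ℕ) [Fact p.Prime] (hν : 0 < ν) (hq : q = p ^ ν)
    (k : Type*) [Field k] [IsAlgClosed k] [CharP k p] [Algebra (GaloisField p (2 * ν)) k]
    (hn : 2 ≤ n) (hnp : ¬ p ∣ n) (h2n : 2 * n ≤ q)
    (A : Matrix (Fin (n + 1)) (Fin (n + 1)) k) (b : ℕ → k)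
    (hb1 : b 1 ≠ 0) (hbq : b q ≠ 0)
    (heq : (∑ i : Fin (n + 1), ∑ j : Fin (n + 1), C (A i j) * X ^ ((i : ℕ) + q * (j : ℕ)))
        = (∑ μ ∈ Finset.Icc 1 q, C (b μ) * X ^ μ) ^ n) :
    ∀ μ : ℕ, 1 < μ → μ < q - n + 1 → b μ = 0 := by
  intro μ
  induction μ using Nat.strong_induction_on with
  | _ μ IH =>
  intro hμ1 hμ2
  have hq4 : 4 ≤ q := le_trans (by omega) h2n
  have hμq : μ ≤ q - n := by omega
  set N := n - 1 + μ with hN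
  set r : k[X] := ∑ x ∈ Finset.Icc μ q, C (b x) * X ^ x with hr
  -- h splits as b₁ X + r using the induction hypothesis
  have hh : (∑ x ∈ Finset.Icc 1 q, C (b x) * X ^ x) = C (b 1) * X + r := by
    have h1 : (1 : ℕ) ∉ Finset.Icc μ q := by simp; omega
    rw [hr, show C (b 1) * X + (∑ x ∈ Finset.Icc μ q, C (b x) * X ^ x)
        = ∑ x ∈ insert 1 (Finset.Icc μ q), C (b x) * X ^ x by
      rw [Finset.sum_insert h1, pow_one]]
    apply (Finset.sum_subset ?_ ?_).symm
    · intro x hx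
      simp only [Finset.mem_insert, Finset.mem_Icc] at hx ⊢
      omega
    · intro x hx hx'
      simp only [Finset.mem_insert, Finset.mem_Icc] at hx hx'
      have hb0 : b x = 0 := IH x (by omega) (by omega) (by omega)
      simp [hb0]
  have hXr : X ^ μ ∣ r := by
    apply Finset.dvd_sum
    intro x hx
    simp only [Finset.mem_Icc] at hx
    exact Dvd.dvd.mul_left (pow_dvd_pow X hx.1) _
  have hrμ : r.coeff μ = b μ := by
    rw [hr, finset_sum_coeff]
    rw [Finset.sum_eq_single μ]
    · simp
    · intro x hx hne
      rw [coeff_C_mul, coeff_X_pow, if_neg (Ne.symm hne), mul_zero]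
    · intro h
      exact absurd (Finset.mem_Icc.mpr ⟨le_refl μ, by omega⟩) h
  rw [hh] at heq
  have hc := congrArg (fun P : k[X] => P.coeff N) heq
  -- left side coefficient is zero
  have hL : (∑ i : Fin (n + 1), ∑ j : Fin (n + 1),
      C (A i j) * X ^ ((i : ℕ) + q * (j : ℕ))).coeff N = 0 := by
    rw [finset_sum_coeff]
    apply Finset.sum_eq_zero
    intro i _
    rw [finset_sum_coeff]
    apply Finset.sum_eq_zero
    intro j _
    rw [coeff_C_mul, coeff_X_pow]
    have hi := i.isLt
    have hj := j.isLt
    have hne : N ≠ (i : ℕ) + q * (j : ℕ) := by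
      rcases Nat.eq_zero_or_pos (j : ℕ) with h0 | h1
      · rw [h0]; omega
      · have : q ≤ q * (j : ℕ) := Nat.le_mul_of_pos_right q h1
        omega
    rw [if_neg hne, mul_zero]
  -- right side coefficient
  have hR : ((C (b 1) * X + r) ^ n).coeff N = b 1 ^ (n - 1) * (n : k) * b μ := by
    rw [add_pow, finset_sum_coeff]
    rw [Finset.sum_eq_single (n - 1)]
    · have hsub : n - (n - 1) = 1 := by omega
      have hch : n.choose (n - 1) = n := by
        rw [← Nat.choose_symm (by omega : n - 1 ≤ n), Nat.sub_sub_self (by omega : 1 ≤ n),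
          Nat.choose_one_right]
      rw [hsub, pow_one, hch]
      have hre : (C (b 1) * X) ^ (n - 1) * r * (n : k[X])
          = C (b 1 ^ (n - 1) * (n : k)) * (X ^ (n - 1) * r) := by
        rw [map_mul, mul_pow, ← C_pow, C_eq_natCast]
        ring
      rw [hre, coeff_C_mul, show N = μ + (n - 1) by omega, coeff_X_pow_mul, hrμ]
    · intro kk hkk hne
      simp only [Finset.mem_range] at hkk
      rcases eq_or_ne kk n with hkn | hkn
      · rw [hkn, Nat.sub_self, pow_zero, mul_one, Nat.choose_self, Nat.cast_one, mul_one,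
          mul_pow, ← C_pow, coeff_C_mul, coeff_X_pow, if_neg (by omega : N ≠ n), mul_zero]
      · -- kk ≤ n - 2 : the term is divisible by a high power of X
        obtain ⟨m, hm⟩ : ∃ m, n - kk = m + 2 := ⟨n - kk - 2, by omega⟩
        have hdvd : X ^ (kk + μ * (n - kk)) ∣
            (C (b 1) * X) ^ kk * r ^ (n - kk) * (n.choose kk : k[X]) := by
          rw [pow_add]
          apply Dvd.dvd.mul_right
          exact mul_dvd_mul (pow_dvd_pow_of_dvd (dvd_mul_left X (C (b 1))) kk)
            (by rw [pow_mul]; exact pow_dvd_pow_of_dvd hXr (n - kk))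
        apply X_pow_dvd_iff.mp hdvd
        have hkkn : kk + (m + 2) = n := by omega
        have hmm : m ≤ μ * m := Nat.le_mul_of_pos_left m (by omega)
        have hexp : μ * (n - kk) = μ * m + 2 * μ := by rw [hm]; ring
        rw [hexp]
        omega
    · intro h
      exact absurd (Finset.mem_range.mpr (by omega)) h
  rw [hL, hR] at hc
  have hn0 : (n : k) ≠ 0 := by
    rw [Ne, CharP.cast_eq_zero_iff k p]
    exact hnp
  have hb1n : b 1 ^ (n - 1) ≠ 0 := pow_ne_zero _ hb1
  rcases mul_eq_zero.mp hc.symm with h | h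
  · exact absurd h (mul_ne_zero hb1n hn0)
  · exact h
end
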